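/- A polynomial f ∈ ℂ[x] is powered (f divides f(x^i) for every i ∈ ℕ) if and only if f divides f(x^p) for every prime number p. -/
import Mathlib

theorem stmt9 (f : Polynomial ℂ) :
    (∀ i : ℕ, 0 < i → f ∣ f.comp (Polynomial.X ^ i)) ↔
      (∀ p : ℕ, p.Prime → f ∣ f.comp (Polynomial.X ^ p)) := by
  constructor
  · intro h p hp
    exact h p hp.pos
  · intro h i hi
    induction i using Nat.strong_induction_on with
    | _ i ih =>
      rcases eq_or_lt_of_le (Nat.one_le_iff_ne_zero.mpr hi.ne') with h1 | h1
      · simp [← h1]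
      · obtain ⟨p, hp, hpd⟩ := Nat.exists_prime_and_dvd (by omega : i ≠ 1)
        obtain ⟨m, hm⟩ := hpd
        have hm0 : 0 < m := by
          rcases Nat.eq_zero_or_pos m with h0 | h0
          · rw [h0, mul_zero] at hm; omega
          · exact h0
        have hmlt : m < i := by
          have := hp.two_le
          nlinarith
        have ihm : f ∣ f.comp (Polynomial.X ^ m) := ih m hmlt hm0
        obtain ⟨g, hg⟩ := ihm
        have key : f.comp (Polynomial.X ^ p) ∣ f.comp (Polynomial.X ^ i) := by
          have : f.comp (Polynomial.X ^ i) =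
              (f.comp (Polynomial.X ^ m)).comp (Polynomial.X ^ p) := by
            rw [Polynomial.comp_assoc]
            congr 1
            rw [hm]
            simp [pow_mul, mul_comm]
          rw [this, hg, Polynomial.mul_comp]
          exact Dvd.intro _ rfl
        exact dvd_trans (h p hp) key
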